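/- Let A be a graded Hopf algebra over a field of characteristic zero with dim A_0 = 1. If p_1, ..., p_n are primitive elements of A, then Δ̃^{n-1}(p_1⋯p_n) = Σ_{σ∈S_n} p_{σ(1)} ⊗ ⋯ ⊗ p_{σ(n)}. -/

import Mathlib

open TensorProduct

section TensorPowers

variable (K : Type) [Field K] (M : Type) [AddCommGroup M] [Module K M]

/-- Left-nested tensor powers: `TP 0 = M`, `TP (n+1) = TP n ⊗ M`, so `TP n = M^{⊗(n+1)}`. -/
noncomputable def TPM : ℕ → ModuleCat K
  | 0 => ModuleCat.of K M
  | n + 1 => ModuleCat.of K (TPM n ⊗[K] M)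

/-- The underlying type of `TPM`. -/
noncomputable abbrev TP (n : ℕ) : Type := TPM K M n

/-- Iterates of a map `D : M → M ⊗ M`: `iterD n = Δ̃ⁿ` when `D = Δ̃`. -/
noncomputable def iterD (D : M →ₗ[K] M ⊗[K] M) : (n : ℕ) → (M →ₗ[K] TP K M n)
  | 0 => LinearMap.id
  | n + 1 => (TensorProduct.map (iterD D n) (LinearMap.id : M →ₗ[K] M)).comp D

/-- The pure tensor `v 0 ⊗ ⋯ ⊗ v n` in `TP n = M^{⊗(n+1)}`. -/
noncomputable def tensorOf : (n : ℕ) → (Fin (n + 1) → M) → TP K M n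
  | 0, v => v 0
  | n + 1, v => (tensorOf n (fun i => v i.castSucc)) ⊗ₜ[K] v (Fin.last (n + 1))

/-- The image of `p ⊗ q` inside `M ⊗ M`. -/
noncomputable def tensorSub (p q : Submodule K M) : Submodule K (M ⊗[K] M) :=
  LinearMap.range (TensorProduct.map p.subtype q.subtype)

end TensorPowers


section
variable {K : Type} [Field K] {A : Type} [Ring A] [HopfAlgebra K A]

noncomputable def selProd : (m : ℕ) → (Fin m → A) → (Fin m → Bool) → A
  | 0, _, _ => 1
  | m + 1, p, c => (if c 0 then p 0 else 1) * selProd m (p ∘ Fin.succ) (c ∘ Fin.succ)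

lemma selProd_succ (m : ℕ) (p : Fin (m+1) → A) (c : Fin (m+1) → Bool) :
    selProd (m+1) p c = (if c 0 then p 0 else 1) * selProd m (p ∘ Fin.succ) (c ∘ Fin.succ) := rfl

lemma selProd_top : ∀ (m : ℕ) (p : Fin m → A) (c : Fin m → Bool), (∀ i, c i = true) →
    selProd m p c = (List.ofFn p).prod
  | 0, p, c, h => by simp [selProd]
  | m + 1, p, c, h => by
    rw [selProd, if_pos (h 0),
      selProd_top m (p ∘ Fin.succ) (c ∘ Fin.succ) (fun i => h i.succ),
      List.ofFn_succ, List.prod_cons]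
    rfl

lemma selProd_bot : ∀ (m : ℕ) (p : Fin m → A) (c : Fin m → Bool), (∀ i, c i = false) →
    selProd m p c = 1
  | 0, p, c, h => by simp [selProd]
  | m + 1, p, c, h => by
    rw [selProd, if_neg (by simp [h 0]),
      selProd_bot m (p ∘ Fin.succ) (c ∘ Fin.succ) (fun i => h i.succ), one_mul]

lemma selProd_single : ∀ (m : ℕ) (p : Fin (m+1) → A) (j : Fin (m+1)),
    selProd (m+1) p (fun i => decide (i = j)) = p j
  | 0, p, j => by
    have hj : j = 0 := Fin.fin_one_eq_zero j
    subst hj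
    rw [selProd, if_pos (by simp), selProd_bot 0 _ _ (fun i => i.elim0), mul_one]
  | m + 1, p, j => by
    rcases Fin.eq_zero_or_eq_succ j with rfl | ⟨j', rfl⟩
    · rw [selProd, if_pos (by simp)]
      rw [selProd_bot (m+1) _ _ (fun i => by simp [Function.comp, Fin.succ_ne_zero]), mul_one]
    · rw [selProd, if_neg (by simp [eq_comm, Fin.succ_ne_zero]), one_mul]
      have h : ((fun i => decide (i = j'.succ)) ∘ Fin.succ)
          = fun i : Fin (m+1) => decide (i = j') := by
        funext i; simp [Fin.succ_inj]
      rw [h, selProd_single m (p ∘ Fin.succ) j']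
      rfl

lemma selProd_compl_single : ∀ (m : ℕ) (p : Fin (m+1) → A) (j : Fin (m+1)),
    selProd (m+1) p (fun i => decide (i ≠ j)) = (List.ofFn (p ∘ j.succAbove)).prod
  | 0, p, j => by
    have hj : j = 0 := Fin.fin_one_eq_zero j
    subst hj
    rw [selProd, if_neg (by simp), one_mul, selProd_bot 0 _ _ (fun i => i.elim0)]
    simp
  | m + 1, p, j => by
    rcases Fin.eq_zero_or_eq_succ j with rfl | ⟨j', rfl⟩
    · rw [selProd, if_neg (by simp)]
      rw [selProd_top (m+1) _ _ (fun i => by simp [Function.comp, Fin.succ_ne_zero]), one_mul]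
      simp [Fin.zero_succAbove]
    · rw [selProd, if_pos (by simp [Ne.symm (Fin.succ_ne_zero j')])]
      have h : ((fun i => decide (i ≠ j'.succ)) ∘ Fin.succ)
          = fun i : Fin (m+1) => decide (i ≠ j') := by
        funext i; simp [Fin.succ_inj]
      rw [h, selProd_compl_single m (p ∘ Fin.succ) j']
      have h2 : List.ofFn (p ∘ (j'.succ).succAbove)
          = p 0 :: List.ofFn ((p ∘ Fin.succ) ∘ j'.succAbove) := by
        rw [List.ofFn_succ]
        congr 1
        · congr 1
          funext i
          simp only [Function.comp]
          exact congrArg p (Fin.succ_succAbove_succ j' i)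
      rw [h2, List.prod_cons]

lemma comulE : ∀ (m : ℕ) (p : Fin m → A),
    (∀ i, CoalgebraStruct.comul (R := K) (p i) = p i ⊗ₜ[K] 1 + (1 : A) ⊗ₜ[K] p i) →
    CoalgebraStruct.comul (R := K) ((List.ofFn p).prod)
      = ∑ c : Fin m → Bool, selProd m p c ⊗ₜ[K] selProd m p (fun i => ! c i)
  | 0, p, hp => by
      simp only [List.ofFn_zero, List.prod_nil]
      rw [Fintype.sum_subsingleton _ (fun _ => false)]
      show CoalgebraStruct.comul 1 = (1 : A) ⊗ₜ[K] 1
      rw [Bialgebra.comul_one]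
      rfl
  | m + 1, p, hp => by
      rw [List.ofFn_succ, List.prod_cons,
        show (CoalgebraStruct.comul (R := K) : A →ₗ[K] A ⊗[K] A) = Coalgebra.comul from rfl,
        Bialgebra.comul_mul, comulE m (fun i => p i.succ) (fun i => hp i.succ)]
      rw [show (Coalgebra.comul (p 0) : A ⊗[K] A) = p 0 ⊗ₜ[K] 1 + (1:A) ⊗ₜ[K] p 0 from hp 0]
      rw [← (Fin.consEquiv (fun _ => Bool)).sum_comp
        (fun c => selProd (m+1) p c ⊗ₜ[K] selProd (m+1) p (fun i => ! c i))]
      rw [Fintype.sum_prod_type, Fintype.sum_bool]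
      simp only [add_mul, Finset.mul_sum]
      rw [Finset.sum_add_distrib]
      congr 1
      · apply Finset.sum_congr rfl
        intro c _
        rw [Algebra.TensorProduct.tmul_mul_tmul, one_mul]
        show _ = selProd (m+1) p (Fin.cons true c : Fin (m+1) → Bool) ⊗ₜ[K]
          selProd (m+1) p (fun i => ! ((Fin.cons true c : Fin (m+1) → Bool) i))
        have h1 : ((Fin.cons true c : Fin (m+1) → Bool) ∘ Fin.succ) = c := by
          funext i; simp
        have h2 : ((fun i => !((Fin.cons true c : Fin (m+1) → Bool) i)) ∘ Fin.succ)
            = fun i => ! c i := by funext i; simp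
        rw [selProd_succ, selProd_succ, h1, h2]
        simp [Fin.cons_zero, Function.comp_def]
      · apply Finset.sum_congr rfl
        intro c _
        rw [Algebra.TensorProduct.tmul_mul_tmul, one_mul]
        show _ = selProd (m+1) p (Fin.cons false c : Fin (m+1) → Bool) ⊗ₜ[K]
          selProd (m+1) p (fun i => ! ((Fin.cons false c : Fin (m+1) → Bool) i))
        have h1 : ((Fin.cons false c : Fin (m+1) → Bool) ∘ Fin.succ) = c := by
          funext i; simp
        have h2 : ((fun i => !((Fin.cons false c : Fin (m+1) → Bool) i)) ∘ Fin.succ)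
            = fun i => ! c i := by funext i; simp
        rw [selProd_succ, selProd_succ, h1, h2]
        simp [Fin.cons_zero, Function.comp_def]

lemma selProd_repr : ∀ (m : ℕ) (p : Fin m → A) (c : Fin m → Bool),
    ∃ (k : ℕ) (q : Fin k → A),
      k = (Finset.univ.filter (fun i => c i = true)).card ∧
      (∀ i, ∃ j, q i = p j) ∧ selProd m p c = (List.ofFn q).prod
  | 0, p, c => by
    refine ⟨0, Fin.elim0, by simp, fun i => i.elim0, by simp [selProd]⟩
  | m + 1, p, c => by
    obtain ⟨k, q, hk, hq, hs⟩ := selProd_repr m (p ∘ Fin.succ) (c ∘ Fin.succ)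
    have hcard : (Finset.univ.filter (fun i : Fin (m+1) => c i = true)).card
        = (if c 0 then 1 else 0)
          + (Finset.univ.filter (fun i : Fin m => c i.succ = true)).card := by
      rw [Finset.card_filter, Finset.card_filter, Fin.sum_univ_succ]
      try simp
    cases hc0 : c 0 with
    | false =>
      refine ⟨k, q, ?_, fun i => (hq i).elim (fun j hj => ⟨j.succ, hj⟩), ?_⟩
      · rw [hcard, hc0, hk]; simp [Function.comp]
      · rw [selProd, hs, if_neg (by simp [hc0]), one_mul]
    | true =>
      refine ⟨k + 1, Fin.cons (p 0) q, ?_, ?_, ?_⟩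
      · rw [hcard, hc0, hk]; simp [Function.comp]; omega
      · intro i
        rcases Fin.eq_zero_or_eq_succ i with rfl | ⟨i', rfl⟩
        · exact ⟨0, by simp⟩
        · obtain ⟨j, hj⟩ := hq i'
          exact ⟨j.succ, by simpa using hj⟩
      · rw [selProd, hs, if_pos (by simp [hc0])]
        rw [List.ofFn_succ]
        simp [List.prod_cons, Fin.cons_succ]
lemma vanish (n : ℕ) : ∀ (m : ℕ) (p : Fin m → A),
    (∀ i, CoalgebraStruct.comul (R := K) (p i) = p i ⊗ₜ[K] 1 + (1 : A) ⊗ₜ[K] p i) →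
    1 ≤ m → m ≤ n →
    iterD K A (CoalgebraStruct.comul - TensorProduct.mk K A A 1
      - (TensorProduct.mk K A A).flip 1) n ((List.ofFn p).prod) = 0 := by
  induction n with
  | zero => intro m p _ h1 h2; omega
  | succ n IH =>
    intro m p hp h1 h2
    classical
    set D : A →ₗ[K] A ⊗[K] A := CoalgebraStruct.comul - TensorProduct.mk K A A 1
      - (TensorProduct.mk K A A).flip 1 with hD
    set x : A := (List.ofFn p).prod with hx
    show (TensorProduct.map (iterD K A D n) LinearMap.id) (D x) = 0
    have hDx : D x = (∑ c : Fin m → Bool,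
        selProd m p c ⊗ₜ[K] selProd m p (fun i => ! c i)) - 1 ⊗ₜ[K] x - x ⊗ₜ[K] 1 := by
      rw [hD]
      simp only [LinearMap.sub_apply, LinearMap.flip_apply, TensorProduct.mk_apply]
      rw [comulE m p hp]
    rw [hDx, map_sub, map_sub, map_sum]
    simp only [TensorProduct.map_tmul, LinearMap.id_coe, id_eq]
    set cT : Fin m → Bool := fun _ => true with hcT
    set cF : Fin m → Bool := fun _ => false with hcF
    have hne : cF ≠ cT := by
      intro h
      have := congrFun h ⟨0, h1⟩
      simp [hcF, hcT] at this
    rw [← Finset.add_sum_erase _ _ (Finset.mem_univ cT),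
      ← Finset.add_sum_erase _ _ (Finset.mem_erase.2 ⟨hne, Finset.mem_univ cF⟩)]
    have e1 : selProd m p cT = x := selProd_top _ _ _ (fun i => rfl)
    have e2 : selProd m p (fun i => ! cT i) = 1 := selProd_bot _ _ _ (fun i => rfl)
    have e3 : selProd m p cF = 1 := selProd_bot _ _ _ (fun i => rfl)
    have e4 : selProd m p (fun i => ! cF i) = x := selProd_top _ _ _ (fun i => rfl)
    rw [e1, e2, e3, e4]
    have hrest : ∑ c ∈ (Finset.univ.erase cT).erase cF,
        (iterD K A D n (selProd m p c)) ⊗ₜ[K] selProd m p (fun i => ! c i) = 0 := by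
      apply Finset.sum_eq_zero
      intro c hc
      obtain ⟨hcF', hc1⟩ := Finset.mem_erase.1 hc
      obtain ⟨hcT', _⟩ := Finset.mem_erase.1 hc1
      obtain ⟨k, q, hk, hq, hs⟩ := selProd_repr m p c
      have hq' : ∀ i, CoalgebraStruct.comul (R := K) (q i)
          = q i ⊗ₜ[K] 1 + (1 : A) ⊗ₜ[K] q i := by
        intro i
        obtain ⟨j, hj⟩ := hq i
        rw [hj]; exact hp j
      have hk1 : 1 ≤ k := by
        have : ∃ i, c i = true := by
          by_contra h
          push_neg at h
          exact hcF' (funext fun i => by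
            have := h i
            simp [hcF, Bool.not_eq_true] at this ⊢
            exact this)
        obtain ⟨i, hi⟩ := this
        rw [hk]
        exact Finset.card_pos.2 ⟨i, Finset.mem_filter.2 ⟨Finset.mem_univ i, hi⟩⟩
      have hkn : k ≤ n := by
        have : ∃ j, c j = false := by
          by_contra h
          push_neg at h
          exact hcT' (funext fun i => by
            have := h i
            simp [hcT, Bool.not_eq_false] at this ⊢
            exact this)
        obtain ⟨j, hj⟩ := this
        have hsub : Finset.univ.filter (fun i => c i = true) ⊆ Finset.univ.erase j := by
          intro i hi
          obtain ⟨_, hi2⟩ := Finset.mem_filter.1 hi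
          exact Finset.mem_erase.2 ⟨fun h => by subst h; rw [hj] at hi2; exact Bool.noConfusion hi2,
            Finset.mem_univ i⟩
        have := Finset.card_le_card hsub
        rw [Finset.card_erase_of_mem (Finset.mem_univ j), Finset.card_univ,
          Fintype.card_fin] at this
        omega
      rw [hs, IH k q hq' hk1 hkn, zero_tmul]
    rw [hrest]
    abel


end

/-- the permutation built from a pivot `j` (sent to `last`) and a permutation of the rest. -/
noncomputable def peel {n : ℕ} (j : Fin (n+2)) (σ : Equiv.Perm (Fin (n+1))) :
    Equiv.Perm (Fin (n+2)) :=
  Equiv.ofBijective (fun i => Fin.lastCases j (fun i' => j.succAbove (σ i')) i)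
    (Finite.injective_iff_bijective.1 (by
      intro a b hab
      induction a using Fin.lastCases with
      | last =>
        induction b using Fin.lastCases with
        | last => rfl
        | cast b' =>
          simp only [Fin.lastCases_last, Fin.lastCases_castSucc] at hab
          exact absurd hab.symm (Fin.succAbove_ne j (σ b'))
      | cast a' =>
        induction b using Fin.lastCases with
        | last =>
          simp only [Fin.lastCases_last, Fin.lastCases_castSucc] at hab
          exact absurd hab (Fin.succAbove_ne j (σ a'))
        | cast b' =>
          simp only [Fin.lastCases_castSucc] at hab
          exact congrArg Fin.castSucc (σ.injective (Fin.succAbove_right_injective hab))))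

lemma peel_last {n : ℕ} (j : Fin (n+2)) (σ : Equiv.Perm (Fin (n+1))) :
    peel j σ (Fin.last (n+1)) = j := by
  show (Fin.lastCases j (fun i' => j.succAbove (σ i')) (Fin.last (n+1)) : Fin (n+2)) = j
  rw [Fin.lastCases_last]

lemma peel_castSucc {n : ℕ} (j : Fin (n+2)) (σ : Equiv.Perm (Fin (n+1))) (i : Fin (n+1)) :
    peel j σ i.castSucc = j.succAbove (σ i) := by
  show (Fin.lastCases j (fun i' => j.succAbove (σ i')) i.castSucc : Fin (n+2)) = _
  rw [Fin.lastCases_castSucc]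

lemma peel_bijective {n : ℕ} :
    Function.Bijective (fun z : Fin (n+2) × Equiv.Perm (Fin (n+1)) => peel z.1 z.2) := by
  rw [Fintype.bijective_iff_injective_and_card]
  constructor
  · rintro ⟨j, σ⟩ ⟨j', σ'⟩ h
    simp only at h
    have hj : j = j' := by
      rw [← peel_last j σ, ← peel_last j' σ', h]
    subst hj
    have hσ : σ = σ' := Equiv.ext fun i => by
      have h1 : (peel j σ) i.castSucc = (peel j σ') i.castSucc := by rw [h]
      rw [peel_castSucc, peel_castSucc] at h1
      exact Fin.succAbove_right_injective h1
    rw [hσ]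
  · rw [Fintype.card_prod, Fintype.card_perm, Fintype.card_perm, Fintype.card_fin,
      Fintype.card_fin, ← Nat.factorial_succ]

variable {K : Type} [Field K] {A : Type} [Ring A] [HopfAlgebra K A]

lemma main_aux (n : ℕ) : ∀ (p : Fin (n+1) → A),
    (∀ i, CoalgebraStruct.comul (R := K) (p i) = p i ⊗ₜ[K] 1 + (1 : A) ⊗ₜ[K] p i) →
    iterD K A (CoalgebraStruct.comul - TensorProduct.mk K A A 1
        - (TensorProduct.mk K A A).flip 1) n ((List.ofFn p).prod)
      = ∑ σ : Equiv.Perm (Fin (n + 1)), tensorOf K A n (p ∘ σ) := by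
  induction n with
  | zero =>
    intro p hp
    haveI : Subsingleton (Equiv.Perm (Fin 1)) :=
      ⟨fun a b => Equiv.ext fun x => Subsingleton.elim _ _⟩
    rw [Fintype.sum_subsingleton _ (1 : Equiv.Perm (Fin 1))]
    show (List.ofFn p).prod = tensorOf K A 0 (p ∘ 1)
    simp [tensorOf]
  | succ n IH =>
    intro p hp
    classical
    set D : A →ₗ[K] A ⊗[K] A := CoalgebraStruct.comul - TensorProduct.mk K A A 1
      - (TensorProduct.mk K A A).flip 1 with hD
    set x : A := (List.ofFn p).prod with hx
    show (TensorProduct.map (iterD K A D n) LinearMap.id) (D x)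
      = ∑ σ : Equiv.Perm (Fin (n + 2)), tensorOf K A (n+1) (p ∘ σ)
    have hDx : D x = (∑ c : Fin (n+2) → Bool,
        selProd (n+2) p c ⊗ₜ[K] selProd (n+2) p (fun i => ! c i)) - 1 ⊗ₜ[K] x - x ⊗ₜ[K] 1 := by
      rw [hD]
      simp only [LinearMap.sub_apply, LinearMap.flip_apply, TensorProduct.mk_apply]
      rw [comulE (n+2) p hp]
    rw [hDx, map_sub, map_sub, map_sum]
    simp only [TensorProduct.map_tmul, LinearMap.id_coe, id_eq]
    set cT : Fin (n+2) → Bool := fun _ => true with hcT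
    set cF : Fin (n+2) → Bool := fun _ => false with hcF
    have hne : cF ≠ cT := by
      intro h
      have := congrFun h 0
      simp [hcF, hcT] at this
    rw [← Finset.add_sum_erase _ _ (Finset.mem_univ cT),
      ← Finset.add_sum_erase _ _ (Finset.mem_erase.2 ⟨hne, Finset.mem_univ cF⟩)]
    have e1 : selProd (n+2) p cT = x := selProd_top _ _ _ (fun i => rfl)
    have e2 : selProd (n+2) p (fun i => ! cT i) = 1 := selProd_bot _ _ _ (fun i => rfl)
    have e3 : selProd (n+2) p cF = 1 := selProd_bot _ _ _ (fun i => rfl)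
    have e4 : selProd (n+2) p (fun i => ! cF i) = x := selProd_top _ _ _ (fun i => rfl)
    rw [e1, e2, e3, e4]
    have hrest : ∑ c ∈ (Finset.univ.erase cT).erase cF,
        (iterD K A D n (selProd (n+2) p c)) ⊗ₜ[K] selProd (n+2) p (fun i => ! c i)
        = ∑ σ : Equiv.Perm (Fin (n + 2)), tensorOf K A (n+1) (p ∘ σ) := by
      set cj : Fin (n+2) → (Fin (n+2) → Bool) := fun j => fun i => decide (i ≠ j) with hcj
      have himg : Finset.univ.image cj ⊆ (Finset.univ.erase cT).erase cF := by
        intro c hc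
        obtain ⟨j, _, rfl⟩ := Finset.mem_image.1 hc
        refine Finset.mem_erase.2 ⟨?_, Finset.mem_erase.2 ⟨?_, Finset.mem_univ _⟩⟩
        · intro h
          obtain ⟨i, hi⟩ := exists_ne j
          have := congrFun h i
          simp [hcj, hcF, hi] at this
        · intro h
          have := congrFun h j
          simp [hcj, hcT] at this
      have hzero : ∀ c ∈ (Finset.univ.erase cT).erase cF, c ∉ Finset.univ.image cj →
          (iterD K A D n (selProd (n+2) p c)) ⊗ₜ[K] selProd (n+2) p (fun i => ! c i) = 0 := by
        intro c hc hcimg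
        obtain ⟨hcF', hc1⟩ := Finset.mem_erase.1 hc
        obtain ⟨hcT', _⟩ := Finset.mem_erase.1 hc1
        have hj : ∃ j, c j = false := by
          by_contra h
          push_neg at h
          exact hcT' (funext fun i => by
            have := h i
            simp [hcT, Bool.not_eq_false] at this ⊢
            exact this)
        obtain ⟨j, hj⟩ := hj
        have hcne : c ≠ cj j := fun h => hcimg (Finset.mem_image.2 ⟨j, Finset.mem_univ j, h.symm⟩)
        have hj2 : ∃ i, i ≠ j ∧ c i = false := by
          by_contra h
          push_neg at h
          apply hcne
          funext i
          by_cases hij : i = j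
          · subst hij; simp [hcj, hj]
          · have hci : c i = true := by simpa using h i hij
            simp [hcj, hij, hci]
        obtain ⟨i, hij, hi⟩ := hj2
        obtain ⟨k, q, hk, hq, hs⟩ := selProd_repr (n+2) p c
        have hq' : ∀ i, CoalgebraStruct.comul (R := K) (q i)
            = q i ⊗ₜ[K] 1 + (1 : A) ⊗ₜ[K] q i := by
          intro i
          obtain ⟨l, hl⟩ := hq i
          rw [hl]; exact hp l
        have hk1 : 1 ≤ k := by
          have : ∃ i, c i = true := by
            by_contra h
            push_neg at h
            exact hcF' (funext fun i => by
              have := h i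
              simp [hcF, Bool.not_eq_true] at this ⊢
              exact this)
          obtain ⟨i0, hi0⟩ := this
          rw [hk]
          exact Finset.card_pos.2 ⟨i0, Finset.mem_filter.2 ⟨Finset.mem_univ i0, hi0⟩⟩
        have hkn : k ≤ n := by
          have hsub : Finset.univ.filter (fun i' => c i' = true)
              ⊆ (Finset.univ.erase j).erase i := by
            intro l hl
            obtain ⟨_, hl2⟩ := Finset.mem_filter.1 hl
            refine Finset.mem_erase.2 ⟨?_, Finset.mem_erase.2 ⟨?_, Finset.mem_univ l⟩⟩
            · rintro rfl; rw [hi] at hl2; exact Bool.noConfusion hl2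
            · rintro rfl; rw [hj] at hl2; exact Bool.noConfusion hl2
          have hcard := Finset.card_le_card hsub
          rw [Finset.card_erase_of_mem (Finset.mem_erase.2 ⟨hij, Finset.mem_univ i⟩),
            Finset.card_erase_of_mem (Finset.mem_univ j), Finset.card_univ,
            Fintype.card_fin] at hcard
          omega
        rw [hs, vanish n k q hq' hk1 hkn, zero_tmul]
      rw [← Finset.sum_subset himg hzero, Finset.sum_image
        (fun a _ b _ h => by
          have h2 := congrFun h a
          simp [hcj] at h2
          exact h2)]
      have hterm : ∀ j : Fin (n+2),
          (iterD K A D n (selProd (n+2) p (cj j))) ⊗ₜ[K] selProd (n+2) p (fun i => ! cj j i)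
          = ∑ σ : Equiv.Perm (Fin (n+1)),
              tensorOf K A n ((p ∘ j.succAbove) ∘ σ) ⊗ₜ[K] p j := by
        intro j
        have hL : selProd (n+2) p (cj j) = (List.ofFn (p ∘ j.succAbove)).prod :=
          selProd_compl_single (n+1) p j
        have hRf : (fun i => ! cj j i) = fun i : Fin (n+2) => decide (i = j) := by
          funext i
          by_cases h : i = j <;> simp [hcj, h]
        have hR : selProd (n+2) p (fun i => ! cj j i) = p j := by
          rw [hRf]; exact selProd_single (n+1) p j
        rw [hL, hR, IH (p ∘ j.succAbove) (fun i => hp _), TensorProduct.sum_tmul]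
      rw [Finset.sum_congr rfl (fun j _ => hterm j)]
      rw [← Fintype.sum_prod_type']
      exact Fintype.sum_bijective _ peel_bijective _ _ (fun z => by
        obtain ⟨j, σ⟩ := z
        show tensorOf K A n ((p ∘ j.succAbove) ∘ σ) ⊗ₜ[K] p j
          = tensorOf K A (n+1) (p ∘ (peel j σ))
        show _ = tensorOf K A n (fun i => (p ∘ (peel j σ)) i.castSucc)
          ⊗ₜ[K] (p ∘ (peel j σ)) (Fin.last (n+1))
        congr 1
        · congr 1
          funext i
          simp only [Function.comp_apply, peel_castSucc]
        · simp only [Function.comp_apply, peel_last])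
    rw [hrest]
    abel

/-- In a graded Hopf algebra over a field of characteristic zero with
`dim A₀ = 1`, if `p 0, …, p n` are primitive then
`Δ̃ⁿ (p 0 ⋯ p n) = Σ_{σ ∈ S_{n+1}} p (σ 0) ⊗ ⋯ ⊗ p (σ n)`. -/
theorem stmt_10 (K : Type) [Field K] [CharZero K] (A : Type) [Ring A] [HopfAlgebra K A]
    (𝒜 : ℕ → Submodule K A) [DirectSum.Decomposition 𝒜]
    (hmul : ∀ n m : ℕ, ∀ x ∈ 𝒜 n, ∀ y ∈ 𝒜 m, x * y ∈ 𝒜 (n + m))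
    (hcomul : ∀ n : ℕ, ∀ x ∈ 𝒜 n,
      CoalgebraStruct.comul (R := K) x
        ∈ ⨆ p ∈ Finset.HasAntidiagonal.antidiagonal n, tensorSub K A (𝒜 p.1) (𝒜 p.2))
    (h0 : Module.finrank K (𝒜 0) = 1)
    (n : ℕ) (p : Fin (n + 1) → A)
    (hp : ∀ i, CoalgebraStruct.comul (R := K) (p i) = p i ⊗ₜ[K] 1 + (1 : A) ⊗ₜ[K] p i) :
    iterD K A
        (CoalgebraStruct.comul - TensorProduct.mk K A A 1 - (TensorProduct.mk K A A).flip 1) n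
        (List.ofFn p).prod
      = ∑ σ : Equiv.Perm (Fin (n + 1)), tensorOf K A n (p ∘ σ) := by
  exact main_aux n p hp
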